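/- Let d ≥ 2 and n ≥ d + 1 be integers, let P be a path with d+1 vertices v_0, v_1, ..., v_d, and let G be the graph obtained from P by adding n - d - 1 new vertices that are pairwise adjacent, where for some fixed index i with 0 ≤ i ≤ d - 3 each new vertex is adjacent either to v_i, v_{i+1}, v_{i+2} or to v_{i+1}, v_{i+2}, v_{i+3} (and to no other vertices of P). Then G has n vertices, diameter exactly d, and exactly d + (n - d - 1)(n - d + 4)/2 edges. -/

import Mathlib

lemma ite_or_add {p q : Prop} [Decidable p] [Decidable q] (h : ¬(p ∧ q)) :
    (if p ∨ q then (1:ℕ) else 0) = (if p then 1 else 0) + (if q then 1 else 0) := by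
  by_cases hp : p <;> by_cases hq : q <;> simp_all

lemma aux_pairs (d : ℕ) : ∑ j ∈ Finset.range (d+1), ∑ k ∈ Finset.range (d+1),
    (if (j + 1 = k ∨ k + 1 = j) then (1:ℕ) else 0) = 2 * d := by
  have hsplit : ∀ j k : ℕ, (if (j + 1 = k ∨ k + 1 = j) then (1:ℕ) else 0)
      = (if j + 1 = k then 1 else 0) + (if k + 1 = j then 1 else 0) := by
    intro j k
    exact ite_or_add (by omega)
  simp only [hsplit, Finset.sum_add_distrib]
  have h1 : ∀ N : ℕ, ∑ j ∈ Finset.range (N+1), ∑ k ∈ Finset.range (N+1),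
      (if j + 1 = k then (1:ℕ) else 0) = N := by
    intro N
    have : ∀ j : ℕ, ∑ k ∈ Finset.range (N+1), (if j + 1 = k then (1:ℕ) else 0)
        = if j + 1 ∈ Finset.range (N+1) then 1 else 0 := by
      intro j
      rw [← Finset.sum_ite_eq' (Finset.range (N+1)) (j+1) (fun _ => (1:ℕ))]
      exact Finset.sum_congr rfl fun k _ => by simp [eq_comm]
    simp only [this, Finset.mem_range]
    rw [Finset.sum_range_succ]
    rw [if_neg (by omega)]
    rw [Finset.sum_congr rfl (fun j hj => if_pos (by have := Finset.mem_range.mp hj; omega))]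
    simp
  have h2 : ∑ j ∈ Finset.range (d+1), ∑ k ∈ Finset.range (d+1),
      (if k + 1 = j then (1:ℕ) else 0) = d := by
    rw [Finset.sum_comm]; exact h1 d
  rw [h1 d, h2]; ring

lemma aux_three (N c1 c2 c3 : ℕ) (h1 : c1 < N) (h2 : c2 < N) (h3 : c3 < N)
    (h12 : c1 ≠ c2) (h13 : c1 ≠ c3) (h23 : c2 ≠ c3) :
    ∑ j ∈ Finset.range N, (if (j = c1 ∨ j = c2 ∨ j = c3) then (1:ℕ) else 0) = 3 := by
  have hsplit : ∀ j : ℕ, (if (j = c1 ∨ j = c2 ∨ j = c3) then (1:ℕ) else 0)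
      = (if j = c1 then 1 else 0) + ((if j = c2 then 1 else 0) + (if j = c3 then 1 else 0)) := by
    intro j
    rw [ite_or_add (by omega), ite_or_add (by omega)]
  simp only [hsplit, Finset.sum_add_distrib]
  rw [Finset.sum_ite_eq' _ c1, Finset.sum_ite_eq' _ c2, Finset.sum_ite_eq' _ c3]
  simp [Finset.mem_range, h1, h2, h3]

lemma walk_lip_bound {V : Type*} {G : SimpleGraph V} (f : V → ℕ)
    (hlip : ∀ a b, G.Adj a b → f b ≤ f a + 1) :
    ∀ {a b : V} (p : G.Walk a b), f b ≤ f a + p.length := by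
  intro a b p
  induction p with
  | nil => simp
  | cons h q ih =>
    rw [SimpleGraph.Walk.length_cons]
    have := hlip _ _ h
    omega

theorem ore_extremal_construction {V : Type*} [Fintype V] (G : SimpleGraph V)
    [DecidableRel G.Adj] (n d i : ℕ) (hd : 2 ≤ d) (hn : d + 1 ≤ n) (hi : i + 3 ≤ d)
    (hcardV : Fintype.card V = n)
    (v : Fin (d + 1) → V) (hinj : Function.Injective v)
    -- the edges among the vertices of `P` are exactly the `d` edges of the path
    (hP : ∀ j k : Fin (d + 1), G.Adj (v j) (v k) ↔ (j.val + 1 = k.val ∨ k.val + 1 = j.val))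
    -- the new vertices are pairwise adjacent
    (hclique : ∀ u w : V, (∀ k, u ≠ v k) → (∀ k, w ≠ v k) → u ≠ w → G.Adj u w)
    -- each new vertex is adjacent exactly to `v i, v (i+1), v (i+2)` or exactly to
    -- `v (i+1), v (i+2), v (i+3)` among the vertices of `P`
    (hS : ∀ u : V, (∀ k, u ≠ v k) →
      ((∀ j : Fin (d + 1), G.Adj u (v j) ↔ (j.val = i ∨ j.val = i + 1 ∨ j.val = i + 2)) ∨
       (∀ j : Fin (d + 1),
          G.Adj u (v j) ↔ (j.val = i + 1 ∨ j.val = i + 2 ∨ j.val = i + 3)))) :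
    Fintype.card V = n ∧ G.Connected ∧ G.diam = d ∧
      G.edgeFinset.card = d + (n - d - 1) * (n - d + 4) / 2 := by
  classical
  have hi1 : i + 1 < d + 1 := by omega
  -- every new vertex is adjacent to v (i+1)
  have hadj_i1 : ∀ u : V, (∀ k, u ≠ v k) → G.Adj u (v ⟨i+1, hi1⟩) := by
    intro u hu
    rcases hS u hu with h | h
    · exact (h _).mpr (Or.inr (Or.inl rfl))
    · exact (h _).mpr (Or.inl rfl)
  -- walks along the path
  have hpath : ∀ (t : ℕ) (j k : Fin (d+1)), j.val + t = k.val →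
      G.edist (v j) (v k) ≤ (t : ℕ∞) := by
    intro t
    induction t with
    | zero =>
      intro j k h
      have : j = k := Fin.ext (by omega)
      subst this
      simp [SimpleGraph.edist_self]
    | succ t ih =>
      intro j k h
      have hk' : j.val + t < d + 1 := by omega
      have h1 : G.edist (v j) (v ⟨j.val + t, hk'⟩) ≤ (t : ℕ∞) := ih j _ rfl
      have h2 : G.Adj (v ⟨j.val + t, hk'⟩) (v k) := (hP _ k).mpr (Or.inl (by simp; omega))
      calc G.edist (v j) (v k)
          ≤ G.edist (v j) (v ⟨j.val + t, hk'⟩) + G.edist (v ⟨j.val + t, hk'⟩) (v k) :=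
            SimpleGraph.edist_triangle
        _ ≤ (t : ℕ∞) + 1 :=
            add_le_add h1 (le_of_eq (SimpleGraph.edist_eq_one_iff_adj.mpr h2))
        _ = ((t + 1 : ℕ) : ℕ∞) := by push_cast; ring
  have hdistjk : ∀ j k : Fin (d+1),
      G.edist (v j) (v k) ≤ (((k.val - j.val) + (j.val - k.val) : ℕ) : ℕ∞) := by
    intro j k
    rcases le_total j.val k.val with h | h
    · have := hpath (k.val - j.val) j k (by omega)
      have e : (k.val - j.val) + (j.val - k.val) = k.val - j.val := by omega
      rw [e]; exact this
    · have := hpath (j.val - k.val) k j (by omega)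
      have e : (k.val - j.val) + (j.val - k.val) = j.val - k.val := by omega
      rw [e, SimpleGraph.edist_comm]; exact this
  -- distance from a path vertex to any new vertex
  have hPS : ∀ (j : Fin (d+1)) (b : V), (∀ k, b ≠ v k) → G.edist (v j) b ≤ (d : ℕ∞) := by
    intro j b hb
    have h1 := hdistjk j ⟨i+1, hi1⟩
    have h2 : G.edist (v ⟨i+1, hi1⟩) b = 1 :=
      SimpleGraph.edist_eq_one_iff_adj.mpr (hadj_i1 b hb).symm
    calc G.edist (v j) b ≤ G.edist (v j) (v ⟨i+1, hi1⟩) + G.edist (v ⟨i+1, hi1⟩) b :=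
          SimpleGraph.edist_triangle
      _ ≤ ((((⟨i+1, hi1⟩ : Fin (d+1)).val - j.val) + (j.val - (⟨i+1, hi1⟩ : Fin (d+1)).val) : ℕ) : ℕ∞) + 1 := by
          rw [h2]; exact add_le_add h1 le_rfl
      _ ≤ (d : ℕ∞) := by
          have hj := j.isLt
          have : (((⟨i+1, hi1⟩ : Fin (d+1)).val - j.val) + (j.val - (⟨i+1, hi1⟩ : Fin (d+1)).val)) + 1 ≤ d := by
            simp only [Fin.val_mk]; omega
          calc _ = ((((⟨i+1, hi1⟩ : Fin (d+1)).val - j.val) + (j.val - (⟨i+1, hi1⟩ : Fin (d+1)).val) + 1 : ℕ) : ℕ∞) := by push_cast; ring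
            _ ≤ (d : ℕ∞) := by exact_mod_cast this
  -- upper bound on all distances
  have hub : ∀ a b : V, G.edist a b ≤ (d : ℕ∞) := by
    intro a b
    by_cases ha : ∃ j, a = v j
    · obtain ⟨j, rfl⟩ := ha
      by_cases hb : ∃ k, b = v k
      · obtain ⟨k, rfl⟩ := hb
        refine le_trans (hdistjk j k) ?_
        have hj := j.isLt; have hk := k.isLt
        exact_mod_cast (by omega : (k.val - j.val) + (j.val - k.val) ≤ d)
      · push_neg at hb
        exact hPS j b hb
    · push_neg at ha
      by_cases hb : ∃ k, b = v k
      · obtain ⟨k, rfl⟩ := hb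
        rw [SimpleGraph.edist_comm]
        exact hPS k a ha
      · push_neg at hb
        by_cases hab : a = b
        · subst hab; simp [SimpleGraph.edist_self]
        · rw [SimpleGraph.edist_eq_one_iff_adj.mpr (hclique a b ha hb hab)]
          exact_mod_cast (by omega : 1 ≤ d)
  have hedist_ne_top : ∀ a b : V, G.edist a b ≠ ⊤ := fun a b =>
    ne_top_of_le_ne_top (ENat.coe_ne_top d) (hub a b)
  have hconn : G.Connected := by
    rw [SimpleGraph.connected_iff]
    refine ⟨fun a b => SimpleGraph.reachable_of_edist_ne_top (hedist_ne_top a b), ?_⟩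
    exact Fintype.card_pos_iff.mp (by omega)
  -- the Lipschitz potential function for the lower bound
  obtain ⟨f, hfv, hfS⟩ : ∃ f : V → ℕ, (∀ j, f (v j) = j.val) ∧
      ∀ u, (∀ k, u ≠ v k) → (i + 1 ≤ f u ∧ f u ≤ i + 2) ∧
        (∀ j : Fin (d + 1), G.Adj u (v j) → f u ≤ j.val + 1 ∧ j.val ≤ f u + 1) := by
    refine ⟨fun u => if h : ∃ j, u = v j then (Classical.choose h).val
      else if G.Adj u (v ⟨i, by omega⟩) then i + 1 else i + 2, fun j => ?_, fun u hu => ?_⟩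
    · have h : ∃ k, v j = v k := ⟨j, rfl⟩
      simp only [dif_pos h]
      exact congrArg Fin.val (hinj (Classical.choose_spec h)).symm
    · have h : ¬∃ j, u = v j := by push_neg; exact hu
      simp only [dif_neg h]
      rcases hS u hu with hc | hc
      · have hadj : G.Adj u (v ⟨i, by omega⟩) := (hc _).mpr (Or.inl rfl)
        rw [if_pos hadj]
        refine ⟨⟨le_refl _, by omega⟩, fun j hj => ?_⟩
        have := (hc j).mp hj; omega
      · have hadj : ¬ G.Adj u (v ⟨i, by omega⟩) := by
          intro hadj
          have := (hc _).mp hadj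
          simp only [Fin.val_mk] at this
          omega
        rw [if_neg hadj]
        refine ⟨⟨by omega, le_refl _⟩, fun j hj => ?_⟩
        have := (hc j).mp hj; omega
  have hlip : ∀ a b : V, G.Adj a b → f b ≤ f a + 1 := by
    intro a b hab
    by_cases ha : ∃ j, a = v j
    · obtain ⟨j, rfl⟩ := ha
      by_cases hb : ∃ k, b = v k
      · obtain ⟨k, rfl⟩ := hb
        rw [hfv, hfv]
        have := (hP j k).mp hab
        omega
      · push_neg at hb
        have := (hfS b hb).2 j hab.symm
        rw [hfv]
        omega
    · push_neg at ha
      by_cases hb : ∃ k, b = v k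
      · obtain ⟨k, rfl⟩ := hb
        have := (hfS a ha).2 k hab
        rw [hfv]
        omega
      · push_neg at hb
        have h1 := (hfS a ha).1
        have h2 := (hfS b hb).1
        omega
  -- lower bound: edist from v 0 to v d is at least d
  have hlow : (d : ℕ∞) ≤ G.edist (v ⟨0, by omega⟩) (v ⟨d, by omega⟩) := by
    have hr : G.Reachable (v ⟨0, by omega⟩) (v ⟨d, by omega⟩) :=
      SimpleGraph.reachable_of_edist_ne_top (hedist_ne_top _ _)
    obtain ⟨p, hp⟩ := hr.exists_walk_length_eq_edist
    rw [← hp]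
    have hw := walk_lip_bound f hlip p
    rw [hfv, hfv] at hw
    simp only [Fin.val_mk] at hw
    exact_mod_cast (by omega : d ≤ p.length)
  have hediam : G.ediam = (d : ℕ∞) :=
    le_antisymm (SimpleGraph.ediam_le_of_edist_le hub)
      (le_trans hlow SimpleGraph.edist_le_ediam)
  have hdiam : G.diam = d := by
    rw [SimpleGraph.diam, hediam]; simp
  -- edge count
  refine ⟨hcardV, hconn, hdiam, ?_⟩
  set Pf : Finset V := Finset.univ.image v with hPfdef
  have hPmem : ∀ a : V, a ∈ Pfᶜ ↔ ∀ k, a ≠ v k := by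
    intro a
    simp [hPfdef, Finset.mem_compl, eq_comm]
  have hPcard : Pf.card = d + 1 := by
    rw [hPfdef, Finset.card_image_of_injective _ hinj, Finset.card_univ, Fintype.card_fin]
  set m := Pfᶜ.card with hmdef
  have hm : m = n - (d + 1) := by
    rw [hmdef, Finset.card_compl, hPcard, hcardV]
  set F : V → V → ℕ := fun a b => if G.Adj a b then 1 else 0 with hFdef
  have hinj' : ∀ x ∈ (Finset.univ : Finset (Fin (d+1))), ∀ y ∈ Finset.univ, v x = v y → x = y :=
    fun x _ y _ h => hinj h
  have block_PP : ∑ a ∈ Pf, ∑ b ∈ Pf, F a b = 2 * d := by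
    rw [hPfdef, Finset.sum_image hinj']
    rw [Finset.sum_congr rfl (fun j _ => Finset.sum_image hinj' (f := fun b => F (v j) b))]
    have hF : ∀ j k : Fin (d+1), F (v j) (v k)
        = if (j.val + 1 = k.val ∨ k.val + 1 = j.val) then 1 else 0 :=
      fun j k => if_congr (hP j k) rfl rfl
    simp only [hF]
    rw [Finset.sum_congr rfl (fun j _ => Fin.sum_univ_eq_sum_range
      (fun kv => if (j.val + 1 = kv ∨ kv + 1 = j.val) then 1 else 0) (d+1))]
    rw [Fin.sum_univ_eq_sum_range (fun jv => ∑ kv ∈ Finset.range (d+1),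
      if (jv + 1 = kv ∨ kv + 1 = jv) then 1 else 0) (d+1)]
    exact aux_pairs d
  have block_SP : ∀ a ∈ Pfᶜ, ∑ b ∈ Pf, F a b = 3 := by
    intro a ha
    have hu : ∀ k, a ≠ v k := (hPmem a).mp ha
    rw [hPfdef, Finset.sum_image hinj']
    rcases hS a hu with hc | hc
    · have hF : ∀ j : Fin (d+1), F a (v j)
          = if (j.val = i ∨ j.val = i + 1 ∨ j.val = i + 2) then 1 else 0 :=
        fun j => if_congr (hc j) rfl rfl
      simp only [hF]
      rw [Fin.sum_univ_eq_sum_range (fun jv => if (jv = i ∨ jv = i + 1 ∨ jv = i + 2) then 1 else 0) (d+1)]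
      exact aux_three (d+1) i (i+1) (i+2) (by omega) (by omega) (by omega) (by omega) (by omega) (by omega)
    · have hF : ∀ j : Fin (d+1), F a (v j)
          = if (j.val = i + 1 ∨ j.val = i + 2 ∨ j.val = i + 3) then 1 else 0 :=
        fun j => if_congr (hc j) rfl rfl
      simp only [hF]
      rw [Fin.sum_univ_eq_sum_range (fun jv => if (jv = i + 1 ∨ jv = i + 2 ∨ jv = i + 3) then 1 else 0) (d+1)]
      exact aux_three (d+1) (i+1) (i+2) (i+3) (by omega) (by omega) (by omega) (by omega) (by omega) (by omega)
  have block_PS : ∑ a ∈ Pf, ∑ b ∈ Pfᶜ, F a b = 3 * m := by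
    rw [Finset.sum_comm]
    have : ∀ b ∈ Pfᶜ, ∑ a ∈ Pf, F a b = 3 := by
      intro b hb
      rw [Finset.sum_congr rfl (fun a _ => (if_congr (G.adj_comm a b) rfl rfl : F a b = F b a))]
      exact block_SP b hb
    rw [Finset.sum_congr rfl this, Finset.sum_const, smul_eq_mul, ← hmdef, mul_comm]
  have block_SS : ∀ a ∈ Pfᶜ, ∑ b ∈ Pfᶜ, F a b = m - 1 := by
    intro a ha
    have hu : ∀ k, a ≠ v k := (hPmem a).mp ha
    have : ∑ b ∈ Pfᶜ, F a b = (Pfᶜ.filter (fun b => G.Adj a b)).card := by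
      rw [Finset.card_filter]
    rw [this]
    have herase : Pfᶜ.filter (fun b => G.Adj a b) = Pfᶜ.erase a := by
      ext b
      simp only [Finset.mem_filter, Finset.mem_erase]
      constructor
      · rintro ⟨hb, hadj⟩
        exact ⟨hadj.ne', hb⟩
      · rintro ⟨hne, hb⟩
        exact ⟨hb, hclique a b hu ((hPmem b).mp hb) hne.symm⟩
    rw [herase, Finset.card_erase_of_mem ha, ← hmdef]
  have h2E : 2 * G.edgeFinset.card = 2 * d + 3 * m + m * (3 + (m - 1)) := by
    rw [← SimpleGraph.sum_degrees_eq_twice_card_edges]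
    have hdeg : ∀ a : V, G.degree a = ∑ b : V, F a b := by
      intro a
      rw [SimpleGraph.degree, SimpleGraph.neighborFinset_eq_filter, Finset.card_filter]
    rw [Finset.sum_congr rfl (fun a _ => hdeg a)]
    rw [← Finset.sum_add_sum_compl Pf]
    have e1 : ∑ a ∈ Pf, ∑ b : V, F a b = 2 * d + 3 * m := by
      rw [Finset.sum_congr rfl (fun a _ => (Finset.sum_add_sum_compl Pf (F a)).symm),
        Finset.sum_add_distrib, block_PP, block_PS]
    have e2 : ∑ a ∈ Pfᶜ, ∑ b : V, F a b = m * (3 + (m - 1)) := by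
      rw [Finset.sum_congr rfl (fun a ha => (Finset.sum_add_sum_compl Pf (F a)).symm)]
      rw [Finset.sum_congr rfl (fun a ha => by rw [block_SP a ha, block_SS a ha])]
      rw [Finset.sum_const, smul_eq_mul, ← hmdef]
    rw [e2, e1]
  have hdvd : 2 ∣ m * (m + 5) := by
    rcases Nat.even_or_odd m with he | ho
    · exact (he.mul_right _).two_dvd
    · have : Even (m + 5) := ho.add_odd (by decide)
      exact (this.mul_left _).two_dvd
  have hiden : 3 * m + m * (3 + (m - 1)) = m * (m + 5) := by
    cases m with
    | zero => simp
    | succ k => simp only [Nat.succ_sub_one]; ring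
  have hfact : m * (m + 5) = (n - d - 1) * (n - d + 4) := by
    have e1 : m = n - d - 1 := by omega
    have e2 : m + 5 = n - d + 4 := by omega
    rw [e2, e1]
  rw [hfact] at hdvd
  have h2E' : 2 * G.edgeFinset.card = 2 * d + (n - d - 1) * (n - d + 4) := by
    rw [h2E]; omega
  omega
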